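/- arXiv:1312.1863 — 3 statements merged into one kernel-verified Lean document; each statement's English description precedes it below -/
import Mathlib

section
/- Let H be a complex Hilbert space, let A₀ and A₁ be densely defined closed linear operators in H with A₀ ⊆ A₁ (graph inclusion) and let x₁ ∈ D(A₁) \ D(A₀). Let (yₙ)ₙ∈ℕ be a linearly independent sequence in H with yₙ → 0. On H ⊕ H define the linear operator A with domain D(A) := {(x₀, 0) : x₀ ∈ D(A₀)} + span{(x₁, yₙ) : n ∈ ℕ} by A(x, y) := A₁x, and define B : H → H ⊕ H, Bx := (x, 0). Then: (i) {x ∈ H : (x, 0) ∈ D(A)} = D(A₀), so that A∘B = A₀; and (ii) the point ((x₁, 0), A₁x₁) lies in the closure of the graph of A in (H ⊕ H) ⊕ H. In particular, x₁ belongs to the domain of the graph-closure of A composed with B, but x₁ ∉ D(closure(A∘B)) = D(A₀). -/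
noncomputable section

open Filter Topology

variable {H : Type*} [NormedAddCommGroup H] [InnerProductSpace ℂ H] [CompleteSpace H]

/-- Epperlein–Vogt counterexample. Let `A₀ ⊆ A₁` be densely defined
closed operators in `H`, `x₁ ∈ D(A₁) \ D(A₀)`, and `(yₙ)` a linearly independent
sequence with `yₙ → 0`. Consider the operator `A` on `H ⊕ H` with domain
`D(A) = (D(A₀) × {0}) + span {(x₁, yₙ) : n ∈ ℕ}`, acting by `A(x, y) = A₁ x`, and
`B : H → H ⊕ H`, `Bx = (x, 0)`. Then (i) `{x : (x,0) ∈ D(A)} = D(A₀)`, so that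
`A ∘ B = A₀`, and (ii) `((x₁, 0), A₁ x₁)` lies in the closure of the graph of `A`. -/
theorem counterexample_closure_comp
    (A₀ A₁ : H →ₗ.[ℂ] H)
    (hA₀d : Dense (A₀.domain : Set H)) (hA₀c : A₀.IsClosed)
    (hA₁d : Dense (A₁.domain : Set H)) (hA₁c : A₁.IsClosed)
    (hle : A₀ ≤ A₁)
    (x₁ : H) (hx₁ : x₁ ∈ A₁.domain) (hx₁' : x₁ ∉ A₀.domain)
    (y : ℕ → H) (hy : LinearIndependent ℂ y) (hy0 : Tendsto y atTop (𝓝 (0 : H))) :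
    (∀ x : H, (x, (0 : H)) ∈
        (A₀.domain.map (LinearMap.inl ℂ H H) ⊔
          Submodule.span ℂ (Set.range fun n => (x₁, y n))) ↔ x ∈ A₀.domain) ∧
      ((x₁, (0 : H)), A₁ ⟨x₁, hx₁⟩) ∈
        closure {q : (H × H) × H |
          q.1 ∈ (A₀.domain.map (LinearMap.inl ℂ H H) ⊔
            Submodule.span ℂ (Set.range fun n => (x₁, y n))) ∧
          ∃ h : q.1.1 ∈ A₁.domain, q.2 = A₁ ⟨q.1.1, h⟩} := by
  constructor
  · intro x
    constructor
    · intro hx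
      rw [Submodule.mem_sup] at hx
      obtain ⟨a, ha, b, hb, hab⟩ := hx
      rw [Finsupp.mem_span_range_iff_exists_finsupp] at hb
      obtain ⟨c, hc⟩ := hb
      obtain ⟨x₀, hx₀, rfl⟩ := Submodule.mem_map.mp ha
      have h2 : (c.sum fun n (a : ℂ) => a • y n) = 0 := by
        have h := congrArg Prod.snd hab
        simp only [← hc, Prod.snd_add, LinearMap.inl_apply, Prod.snd_zero] at h
        rw [← h]
        simp [Finsupp.sum, Prod.snd_sum]
      have hc0 : c = 0 := by
        rw [linearIndependent_iff] at hy
        apply hy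
        rwa [Finsupp.linearCombination_apply]
      have hb0 : b = 0 := by
        rw [← hc, hc0]
        simp
      rw [hb0, add_zero] at hab
      have : x = x₀ := (congrArg Prod.fst hab).symm
      rwa [this]
    · intro hx
      exact Submodule.mem_sup_left (Submodule.mem_map_of_mem hx)
  · refine mem_closure_of_tendsto
      (f := fun n : ℕ => (((x₁, y n) : H × H), A₁ ⟨x₁, hx₁⟩)) (b := atTop)
      ((Tendsto.prodMk_nhds tendsto_const_nhds hy0).prodMk_nhds tendsto_const_nhds) ?_
    filter_upwards with n
    exact ⟨Submodule.mem_sup_right (Submodule.subset_span ⟨n, rfl⟩), hx₁, rfl⟩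
end
end

section
/- Let μ, α, λ ∈ ℝ and define the linear operator C on M₃ by C := 2μ·sym₀ + 2α·skew + (3λ+2μ)·ℙ. Then C is selfadjoint with respect to the Frobenius inner product, and C is strictly positive definite if and only if μ > 0, α > 0 and λ + (2/3)μ > 0. -/
noncomputable section

open Matrix

/-- The space of real `3 × 3` matrices. -/
abbrev M3 : Type := Matrix (Fin 3) (Fin 3) ℝ

/-- The Frobenius inner product `⟨σ, τ⟩ = trace (σᵀ * τ)` on `M3`. -/
def finner (σ τ : M3) : ℝ := (σᵀ * τ).trace

/-- The symmetric part map `sym τ = (τ + τᵀ)/2`. -/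
def symM : M3 →ₗ[ℝ] M3 :=
  (2 : ℝ)⁻¹ • (LinearMap.id + (Matrix.transposeLinearEquiv (Fin 3) (Fin 3) ℝ ℝ).toLinearMap)

/-- The skew-symmetric part map `skew τ = (τ - τᵀ)/2`. -/
def skewM : M3 →ₗ[ℝ] M3 :=
  (2 : ℝ)⁻¹ • (LinearMap.id - (Matrix.transposeLinearEquiv (Fin 3) (Fin 3) ℝ ℝ).toLinearMap)

/-- The volumetric (pressure) part `ℙ τ = (trace τ / 3) • I`. -/
def volP : M3 →ₗ[ℝ] M3 :=
  (Matrix.traceLinearMap (Fin 3) ℝ ℝ).smulRight ((3 : ℝ)⁻¹ • (1 : M3))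

/-- The trace-free symmetric part `sym₀ = sym - ℙ`. -/
def sym0 : M3 →ₗ[ℝ] M3 := symM - volP

lemma symM_apply (τ : M3) : symM τ = (2:ℝ)⁻¹ • (τ + τᵀ) := by
  simp [symM, transposeLinearEquiv]
lemma skewM_apply (τ : M3) : skewM τ = (2:ℝ)⁻¹ • (τ - τᵀ) := by
  simp [skewM, transposeLinearEquiv]
lemma volP_apply (τ : M3) : volP τ = ((3:ℝ)⁻¹ * τ.trace) • (1 : M3) := by
  simp [volP, smul_smul, mul_comm]

lemma finner_sum (σ τ : M3) : finner σ τ = ∑ i, ∑ j, σ j i * τ j i := by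
  simp [finner, Matrix.trace, Matrix.mul_apply, Matrix.diag, Matrix.transpose_apply]

lemma finner_self_nonneg (τ : M3) : 0 ≤ finner τ τ := by
  rw [finner_sum]
  apply Finset.sum_nonneg; intro i _
  apply Finset.sum_nonneg; intro j _
  exact mul_self_nonneg _

lemma finner_self_eq_zero {τ : M3} (h : finner τ τ = 0) : τ = 0 := by
  rw [finner_sum] at h
  ext i j
  have h1 := (Finset.sum_eq_zero_iff_of_nonneg (fun i _ => Finset.sum_nonneg
    (fun j _ => mul_self_nonneg (τ j i)))).mp h
  have h2 := (Finset.sum_eq_zero_iff_of_nonneg (fun k _ => mul_self_nonneg (τ k j))).mp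
    (h1 j (Finset.mem_univ j)) i (Finset.mem_univ i)
  simpa using mul_self_eq_zero.mp h2

lemma finner_add_right (σ τ₁ τ₂ : M3) : finner σ (τ₁ + τ₂) = finner σ τ₁ + finner σ τ₂ := by
  simp [finner, mul_add]
lemma finner_smul_right (c : ℝ) (σ τ : M3) : finner σ (c • τ) = c * finner σ τ := by
  simp [finner, Matrix.mul_smul]
lemma finner_comm (σ τ : M3) : finner σ τ = finner τ σ := by
  rw [finner_sum, finner_sum]; congr 1; ext i; congr 1; ext j; ring

lemma finner_transpose (σ τ : M3) : finner σᵀ τ = finner σ τᵀ := by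
  rw [finner_sum, finner_sum, Finset.sum_comm]
  simp [Matrix.transpose_apply]

lemma finner_symM (σ τ : M3) : finner (symM σ) τ = finner σ (symM τ) := by
  rw [symM_apply, symM_apply, finner_comm, finner_smul_right, finner_smul_right,
    finner_add_right, finner_add_right, finner_comm τ σ, finner_comm τ σᵀ, finner_transpose]

lemma finner_skewM (σ τ : M3) : finner (skewM σ) τ = finner σ (skewM τ) := by
  rw [skewM_apply, skewM_apply, finner_comm, finner_smul_right, finner_smul_right,
    sub_eq_add_neg, sub_eq_add_neg, finner_add_right, finner_add_right]
  have h1 : finner τ (-σᵀ) = -finner τ σᵀ := by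
    rw [show (-σᵀ) = (-1 : ℝ) • σᵀ by simp, finner_smul_right]; ring
  have h2 : finner σ (-τᵀ) = -finner σ τᵀ := by
    rw [show (-τᵀ) = (-1 : ℝ) • τᵀ by simp, finner_smul_right]; ring
  rw [h1, h2, finner_comm τ σ, finner_comm τ σᵀ, finner_transpose]

lemma finner_volP (σ τ : M3) : finner (volP σ) τ = finner σ (volP τ) := by
  rw [volP_apply, volP_apply, finner_comm, finner_smul_right, finner_smul_right]
  have h : ∀ a b : M3, finner a (1 : M3) = a.trace := by
    intro a b; simp [finner, Matrix.trace_transpose]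
  rw [h τ τ, h σ σ]; ring

lemma trace_oneM : (1 : M3).trace = 3 := by
  simp [Matrix.trace_one]

lemma symM_idem (τ : M3) : symM (symM τ) = symM τ := by
  rw [symM_apply τ, symM_apply]
  simp [Matrix.transpose_add, Matrix.transpose_smul]
  module

lemma skewM_idem (τ : M3) : skewM (skewM τ) = skewM τ := by
  rw [skewM_apply τ, skewM_apply]
  simp [Matrix.transpose_sub, Matrix.transpose_smul]
  module

lemma volP_idem (τ : M3) : volP (volP τ) = volP τ := by
  rw [volP_apply τ, volP_apply]
  simp [Matrix.trace_smul, trace_oneM, smul_smul]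
  ring_nf

lemma symM_volP (τ : M3) : symM (volP τ) = volP τ := by
  rw [volP_apply, symM_apply]
  simp [Matrix.transpose_smul, Matrix.transpose_one]
  module

lemma volP_symM (τ : M3) : volP (symM τ) = volP τ := by
  rw [symM_apply, volP_apply, volP_apply]
  simp [Matrix.trace_smul, Matrix.trace_add, Matrix.trace_transpose, smul_smul]
  ring_nf

lemma sym0_idem (τ : M3) : sym0 (sym0 τ) = sym0 τ := by
  simp only [sym0, LinearMap.sub_apply, map_sub]
  rw [symM_idem, symM_volP, volP_symM, volP_idem]
  abel

lemma finner_sub_right (σ τ₁ τ₂ : M3) : finner σ (τ₁ - τ₂) = finner σ τ₁ - finner σ τ₂ := by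
  rw [sub_eq_add_neg, finner_add_right, show (-τ₂) = (-1:ℝ) • τ₂ by simp, finner_smul_right]
  ring

lemma finner_sub_left (σ₁ σ₂ τ : M3) : finner (σ₁ - σ₂) τ = finner σ₁ τ - finner σ₂ τ := by
  rw [finner_comm, finner_sub_right, finner_comm τ σ₁, finner_comm τ σ₂]

lemma finner_sym0 (σ τ : M3) : finner (sym0 σ) τ = finner σ (sym0 τ) := by
  simp only [sym0, LinearMap.sub_apply]
  rw [finner_sub_left, finner_sub_right, finner_symM, finner_volP]

lemma decomp (τ : M3) : sym0 τ + skewM τ + volP τ = τ := by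
  simp only [sym0, LinearMap.sub_apply]
  rw [symM_apply, skewM_apply]
  module

lemma finner_self_pos {τ : M3} (h : τ ≠ 0) : 0 < finner τ τ :=
  lt_of_le_of_ne (finner_self_nonneg τ) (fun h0 => h (finner_self_eq_zero h0.symm))

lemma q_sym0 (τ : M3) : finner τ (sym0 τ) = finner (sym0 τ) (sym0 τ) := by
  conv_lhs => rw [← sym0_idem τ]
  rw [← finner_sym0]

lemma q_skew (τ : M3) : finner τ (skewM τ) = finner (skewM τ) (skewM τ) := by
  conv_lhs => rw [← skewM_idem τ]
  rw [← finner_skewM]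

lemma q_volP (τ : M3) : finner τ (volP τ) = finner (volP τ) (volP τ) := by
  conv_lhs => rw [← volP_idem τ]
  rw [← finner_volP]

lemma Cval (μ α lam : ℝ) (τ : M3) :
    finner τ (((2 * μ) • sym0 + (2 * α) • skewM + (3 * lam + 2 * μ) • volP) τ) =
      (2 * μ) * finner (sym0 τ) (sym0 τ) + (2 * α) * finner (skewM τ) (skewM τ) +
        (3 * lam + 2 * μ) * finner (volP τ) (volP τ) := by
  simp only [LinearMap.add_apply, LinearMap.smul_apply]
  rw [finner_add_right, finner_add_right, finner_smul_right, finner_smul_right,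
    finner_smul_right, q_sym0, q_skew, q_volP]

/-- For `C := 2μ·sym₀ + 2α·skew + (3λ+2μ)·ℙ` on `M3`: `C` is
selfadjoint for the Frobenius inner product, and `C` is strictly positive definite
iff `μ > 0`, `α > 0` and `λ + (2/3)μ > 0`. -/
theorem isotropic_elasticity_tensor_posDef_iff (μ α lam : ℝ) :
    (∀ σ τ : M3,
        finner (((2 * μ) • sym0 + (2 * α) • skewM + (3 * lam + 2 * μ) • volP) σ) τ =
          finner σ (((2 * μ) • sym0 + (2 * α) • skewM + (3 * lam + 2 * μ) • volP) τ)) ∧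
      ((∀ τ : M3, τ ≠ 0 →
          0 < finner τ (((2 * μ) • sym0 + (2 * α) • skewM + (3 * lam + 2 * μ) • volP) τ)) ↔
        (0 < μ ∧ 0 < α ∧ 0 < lam + (2 / 3) * μ)) := by
  constructor
  · intro σ τ
    simp only [LinearMap.add_apply, LinearMap.smul_apply]
    rw [finner_add_right, finner_add_right, finner_smul_right, finner_smul_right,
      finner_smul_right, finner_comm, finner_add_right, finner_add_right,
      finner_smul_right, finner_smul_right, finner_smul_right,
      finner_comm τ (sym0 σ), finner_comm τ (skewM σ), finner_comm τ (volP σ),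
      finner_sym0, finner_skewM, finner_volP]
  · constructor
    · intro hpos
      -- μ > 0
      have hA : ∀ (A : M3), A ≠ 0 → Aᵀ = A → A.trace = 0 →
          0 < 2 * μ * finner A A := by
        intro A hne hsymm htr
        have h1 : sym0 A = A := by
          simp only [sym0, LinearMap.sub_apply]
          rw [symM_apply, volP_apply, hsymm, htr]
          module
        have h2 : skewM A = 0 := by rw [skewM_apply, hsymm]; simp
        have h3 : volP A = 0 := by rw [volP_apply, htr]; simp
        have := hpos A hne
        rw [Cval, h1, h2, h3] at this
        simpa [finner, Matrix.trace] using this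
      have hB : ∀ (B : M3), B ≠ 0 → Bᵀ = -B →
          0 < 2 * α * finner B B := by
        intro B hne hskew
        have htr : B.trace = 0 := by
          have : B.trace = -B.trace := by
            conv_lhs => rw [← Matrix.trace_transpose B, hskew]
            simp
          linarith
        have h2 : skewM B = B := by rw [skewM_apply, hskew]; module
        have h1 : sym0 B = 0 := by
          simp only [sym0, LinearMap.sub_apply]
          rw [symM_apply, volP_apply, hskew, htr]
          simp
        have h3 : volP B = 0 := by rw [volP_apply, htr]; simp
        have := hpos B hne
        rw [Cval, h1, h2, h3] at this
        simpa [finner, Matrix.trace] using this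
      set A : M3 := !![0,1,0;1,0,0;0,0,0] with hAdef
      set B : M3 := !![0,1,0;-1,0,0;0,0,0] with hBdef
      have hAne : A ≠ 0 := by
        intro h
        have := congrFun (congrFun h 0) 1
        simp [hAdef] at this
      have hBne : B ≠ 0 := by
        intro h
        have := congrFun (congrFun h 0) 1
        simp [hBdef] at this
      have hAs : Aᵀ = A := by
        ext i j; fin_cases i <;> fin_cases j <;> simp [hAdef, Matrix.vecHead, Matrix.vecTail]
      have hAt : A.trace = 0 := by simp [hAdef, Matrix.trace, Fin.sum_univ_three, Matrix.vecHead, Matrix.vecTail]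
      have hBs : Bᵀ = -B := by
        ext i j; fin_cases i <;> fin_cases j <;> simp [hBdef, Matrix.vecHead, Matrix.vecTail]
      have hfA : finner A A = 2 := by
        rw [finner_sum]
        simp [hAdef, Fin.sum_univ_three]
        norm_num
      have hfB : finner B B = 2 := by
        rw [finner_sum]
        simp [hBdef, Fin.sum_univ_three]
        norm_num
      have hμ : 0 < μ := by have := hA A hAne hAs hAt; rw [hfA] at this; linarith
      have hα : 0 < α := by have := hB B hBne hBs; rw [hfB] at this; linarith
      -- identity
      have hIne : (1 : M3) ≠ 0 := by
        intro h
        have := congrFun (congrFun h 0) 0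
        simp at this
      have h1 : sym0 (1 : M3) = 0 := by
        simp only [sym0, LinearMap.sub_apply]
        rw [symM_apply, volP_apply, Matrix.transpose_one, trace_oneM]
        have h31 : (3:ℝ)⁻¹ * 3 = 1 := by norm_num
        rw [h31]
        module
      have h2 : skewM (1 : M3) = 0 := by rw [skewM_apply, Matrix.transpose_one]; simp
      have h3 : volP (1 : M3) = 1 := by
        rw [volP_apply, trace_oneM]
        norm_num
      have hfI : finner (1 : M3) (1 : M3) = 3 := by
        rw [finner_sum]
        simp [Matrix.one_apply, Fin.sum_univ_three]
      have := hpos 1 hIne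
      rw [Cval, h1, h2, h3, hfI] at this
      simp only [finner, Matrix.transpose_zero, Matrix.zero_mul, Matrix.trace_zero] at this
      refine ⟨hμ, hα, ?_⟩
      nlinarith [this]
    · rintro ⟨hμ, hα, hl⟩ τ hne
      rw [Cval]
      have q1 := finner_self_nonneg (sym0 τ)
      have q2 := finner_self_nonneg (skewM τ)
      have q3 := finner_self_nonneg (volP τ)
      have hcoef : 0 < 3 * lam + 2 * μ := by linarith
      by_cases h1 : sym0 τ = 0
      · by_cases h2 : skewM τ = 0
        · have h3 : volP τ ≠ 0 := by
            intro h3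
            apply hne
            rw [← decomp τ, h1, h2, h3]; simp
          have := finner_self_pos h3
          nlinarith
        · have := finner_self_pos h2
          nlinarith
      · have := finner_self_pos h1
        nlinarith
end
end

section
/- Let H₀, H₁ be complex Hilbert spaces, let C₀ ∈ L(H₀) be selfadjoint, strictly positive definite and boundedly invertible, let E ∈ L(H₀, H₁), and let C₂ ∈ L(H₁) be selfadjoint. Then the block operator [[C₀, E*], [E, C₂]] on H₀ ⊕ H₁ is strictly positive definite if and only if the Schur complement C₂ − E C₀⁻¹ E* ∈ L(H₁) is strictly positive definite. -/
set_option maxHeartbeats 1000000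
noncomputable section

variable {H₀ H₁ : Type*}
  [NormedAddCommGroup H₀] [InnerProductSpace ℂ H₀] [CompleteSpace H₀]
  [NormedAddCommGroup H₁] [InnerProductSpace ℂ H₁] [CompleteSpace H₁]

/-- If `C₀` is selfadjoint, strictly positive definite and boundedly
invertible and `C₂` is selfadjoint, then the block operator `[[C₀, E*], [E, C₂]]` on
`H₀ ⊕ H₁` is strictly positive definite iff the Schur complement `C₂ − E C₀⁻¹ E*` is
strictly positive definite. -/
theorem block_posDef_iff_schur_posDef
    (C₀ : H₀ →L[ℂ] H₀) (hC₀sa : IsSelfAdjoint C₀)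
    (hC₀pos : ∃ c : ℝ, 0 < c ∧ ∀ x : H₀, c * ‖x‖ ^ 2 ≤ (inner ℂ x (C₀ x) : ℂ).re)
    (C₀inv : H₀ →L[ℂ] H₀)
    (hC₀₁ : C₀.comp C₀inv = ContinuousLinearMap.id ℂ H₀)
    (hC₀₂ : C₀inv.comp C₀ = ContinuousLinearMap.id ℂ H₀)
    (E : H₀ →L[ℂ] H₁) (C₂ : H₁ →L[ℂ] H₁) (hC₂sa : IsSelfAdjoint C₂) :
    (∃ c : ℝ, 0 < c ∧ ∀ (x : H₀) (y : H₁),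
        c * (‖x‖ ^ 2 + ‖y‖ ^ 2) ≤
          ((inner ℂ x (C₀ x + ContinuousLinearMap.adjoint E y) : ℂ) +
            (inner ℂ y (E x + C₂ y) : ℂ)).re) ↔
      (∃ c : ℝ, 0 < c ∧ ∀ y : H₁,
        c * ‖y‖ ^ 2 ≤
          (inner ℂ y ((C₂ - E.comp (C₀inv.comp (ContinuousLinearMap.adjoint E))) y) : ℂ).re) := by
  -- C₀inv is selfadjoint
  have hinvsa : ContinuousLinearMap.adjoint C₀inv = C₀inv := by
    have h1 : (ContinuousLinearMap.adjoint C₀inv).comp C₀ = ContinuousLinearMap.id ℂ H₀ := by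
      have := congrArg ContinuousLinearMap.adjoint hC₀₁
      rwa [ContinuousLinearMap.adjoint_comp, hC₀sa.adjoint_eq,
        ContinuousLinearMap.adjoint_id] at this
    calc ContinuousLinearMap.adjoint C₀inv
        = (ContinuousLinearMap.adjoint C₀inv).comp (C₀.comp C₀inv) := by
          rw [hC₀₁, ContinuousLinearMap.comp_id]
      _ = ((ContinuousLinearMap.adjoint C₀inv).comp C₀).comp C₀inv := by
          rw [ContinuousLinearMap.comp_assoc]
      _ = C₀inv := by rw [h1, ContinuousLinearMap.id_comp]
  have hswap : ∀ v w : H₀, (inner ℂ (C₀inv v) w : ℂ) = inner ℂ v (C₀inv w) := by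
    intro v w
    conv_lhs => rw [← hinvsa]
    exact ContinuousLinearMap.adjoint_inner_left C₀inv w v
  set E' := ContinuousLinearMap.adjoint E with hE'
  have h2 : ∀ y : H₁, C₀ (C₀inv (E' y)) = E' y := fun y => by
    have := DFunLike.congr_fun hC₀₁ (E' y); simpa using this
  have h3 : ∀ x : H₀, C₀inv (C₀ x) = x := fun x => by
    have := DFunLike.congr_fun hC₀₂ x; simpa using this
  -- completing the square
  have key : ∀ (x : H₀) (y : H₁),
      ((inner ℂ x (C₀ x + E' y) : ℂ) + (inner ℂ y (E x + C₂ y) : ℂ))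
        = (inner ℂ (x + C₀inv (E' y)) (C₀ (x + C₀inv (E' y))) : ℂ)
          + (inner ℂ y ((C₂ - E.comp (C₀inv.comp E')) y) : ℂ) := by
    intro x y
    simp only [map_add, inner_add_left, inner_add_right, ContinuousLinearMap.sub_apply,
      inner_sub_right, ContinuousLinearMap.comp_apply, h2]
    rw [hswap (E' y) (C₀ x), h3, hswap (E' y) (E' y)]
    rw [hE', ContinuousLinearMap.adjoint_inner_left, ContinuousLinearMap.adjoint_inner_left]
    ring
  constructor
  · rintro ⟨c, hc, h⟩
    refine ⟨c, hc, fun y => ?_⟩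
    have hxy := h (-(C₀inv (E' y))) y
    rw [key] at hxy
    have hu : -(C₀inv (E' y)) + C₀inv (E' y) = 0 := by abel
    rw [hu] at hxy
    simp only [map_zero, inner_zero_left, zero_add] at hxy
    have : c * ‖y‖ ^ 2 ≤ c * (‖-(C₀inv (E' y))‖ ^ 2 + ‖y‖ ^ 2) := by
      have : (0:ℝ) ≤ ‖-(C₀inv (E' y))‖ ^ 2 := by positivity
      nlinarith
    linarith
  · rintro ⟨cS, hcS, hS⟩
    obtain ⟨c₀, hc₀, h₀⟩ := hC₀pos
    set M := ‖C₀inv.comp E'‖ with hM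
    have hM0 : (0:ℝ) ≤ M := norm_nonneg _
    set ε := min c₀ (cS / (2 * M ^ 2 + 1)) with hε
    have hεpos : 0 < ε := lt_min hc₀ (by positivity)
    have hεc₀ : ε ≤ c₀ := min_le_left _ _
    have hεM : ε * M ^ 2 ≤ cS / 2 := by
      have h1 : ε ≤ cS / (2 * M ^ 2 + 1) := min_le_right _ _
      have h2 : ε * M ^ 2 ≤ cS / (2 * M ^ 2 + 1) * M ^ 2 :=
        mul_le_mul_of_nonneg_right h1 (by positivity)
      have h3 : cS / (2 * M ^ 2 + 1) * M ^ 2 ≤ cS / 2 := by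
        rw [div_mul_eq_mul_div, div_le_div_iff₀ (by positivity) (by norm_num)]
        nlinarith
      linarith
    refine ⟨min (ε / 2) (cS / 2), lt_min (by positivity) (by positivity), fun x y => ?_⟩
    rw [key]
    set u := x + C₀inv (E' y) with hu
    have hbound : ‖x‖ ≤ ‖u‖ + M * ‖y‖ := by
      have hx : x = u - C₀inv (E' y) := by rw [hu]; abel
      calc ‖x‖ = ‖u - C₀inv (E' y)‖ := by rw [← hx]
        _ ≤ ‖u‖ + ‖C₀inv (E' y)‖ := norm_sub_le _ _
        _ ≤ ‖u‖ + M * ‖y‖ := by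
            have : ‖C₀inv (E' y)‖ = ‖(C₀inv.comp E') y‖ := by simp
            rw [this]
            exact add_le_add le_rfl ((C₀inv.comp E').le_opNorm y)
    have hx2 : ‖x‖ ^ 2 ≤ 2 * ‖u‖ ^ 2 + 2 * (M * ‖y‖) ^ 2 := by
      have hsq : ‖x‖ ^ 2 ≤ (‖u‖ + M * ‖y‖) ^ 2 :=
        pow_le_pow_left₀ (norm_nonneg x) hbound 2
      nlinarith [sq_nonneg (‖u‖ - M * ‖y‖)]
    have hlow : c₀ * ‖u‖ ^ 2 + cS * ‖y‖ ^ 2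
        ≤ ((inner ℂ u (C₀ u) : ℂ) + (inner ℂ y ((C₂ - E.comp (C₀inv.comp E')) y) : ℂ)).re := by
      have := h₀ u
      have := hS y
      simp only [Complex.add_re]
      linarith
    clear_value u M ε
    have hcombo : min (ε / 2) (cS / 2) * (‖x‖ ^ 2 + ‖y‖ ^ 2)
        ≤ c₀ * ‖u‖ ^ 2 + cS * ‖y‖ ^ 2 := by
      have hm1 : min (ε / 2) (cS / 2) ≤ ε / 2 := min_le_left _ _
      have hm2 : min (ε / 2) (cS / 2) ≤ cS / 2 := min_le_right _ _
      have A1 : min (ε / 2) (cS / 2) * ‖x‖ ^ 2 ≤ ε / 2 * ‖x‖ ^ 2 :=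
        mul_le_mul_of_nonneg_right hm1 (sq_nonneg _)
      have A2 : min (ε / 2) (cS / 2) * ‖y‖ ^ 2 ≤ cS / 2 * ‖y‖ ^ 2 :=
        mul_le_mul_of_nonneg_right hm2 (sq_nonneg _)
      have A3 : ε / 2 * ‖x‖ ^ 2 ≤ ε / 2 * (2 * ‖u‖ ^ 2 + 2 * (M * ‖y‖) ^ 2) :=
        mul_le_mul_of_nonneg_left hx2 (by positivity)
      have A4 : ε * ‖u‖ ^ 2 ≤ c₀ * ‖u‖ ^ 2 :=
        mul_le_mul_of_nonneg_right hεc₀ (sq_nonneg _)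
      have A5 : ε * M ^ 2 * ‖y‖ ^ 2 ≤ cS / 2 * ‖y‖ ^ 2 :=
        mul_le_mul_of_nonneg_right hεM (sq_nonneg _)
      have A6 : ε / 2 * (2 * ‖u‖ ^ 2 + 2 * (M * ‖y‖) ^ 2)
          = ε * ‖u‖ ^ 2 + ε * M ^ 2 * ‖y‖ ^ 2 := by ring
      linarith
    linarith
end
end
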